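/- Let (Ω, ℱ, P) be a probability space with a filtration (ℱ_t)_{t ∈ [0,T]}, and let h : [0,T] × Ω → ℝ be jointly measurable and bounded, such that for every s ∈ (0,T] the random variable h_s is measurable with respect to ℱ_{s-} := σ(⋃_{u < s} ℱ_u). If the process M_t := ∫_0^t h_s ds is a martingale with respect to (ℱ_t) under P, then h = 0 almost everywhere with respect to the product of Lebesgue measure on [0,T] and P. (In particular, a martingale whose paths are absolutely continuous integrals of such an integrand is constant.) -/

import Mathlib

open MeasureTheory

private lemma aux_ae_zero {f : ℝ → ℝ} {T C : ℝ} (hT : 0 ≤ T) (hf : Measurable f)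
    (hC : ∀ s, |f s| ≤ C)
    (h0 : ∀ t ∈ Set.Icc (0:ℝ) T, ∫ s in (0:ℝ)..t, f s = 0) :
    f =ᵐ[volume.restrict (Set.Icc (0:ℝ) T)] 0 := by
  set μ := volume.restrict (Set.Icc (0:ℝ) T) with hμ
  have hfin : IsFiniteMeasure μ := by
    refine ⟨?_⟩
    rw [hμ, Measure.restrict_apply_univ]
    exact measure_Icc_lt_top
  have hIntV : ∀ a b : ℝ, IntervalIntegrable f volume a b := by
    intro a b
    constructor <;>
      exact ⟨hf.aestronglyMeasurable.restrict,
        HasFiniteIntegral.of_bounded (C := C) (ae_of_all _ fun s => (Real.norm_eq_abs _ ▸ hC s))⟩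
  have hInt : Integrable f μ :=
    ⟨hf.aestronglyMeasurable,
      HasFiniteIntegral.of_bounded (C := C) (ae_of_all _ fun s => (Real.norm_eq_abs _ ▸ hC s))⟩
  have htot : ∫ x, f x ∂μ = 0 := by
    have h1 : ∫ x, f x ∂μ = ∫ x in Set.Ioc (0:ℝ) T, f x := by
      rw [hμ, ← Measure.restrict_congr_set MeasureTheory.Ioc_ae_eq_Icc]
    rw [h1, ← intervalIntegral.integral_of_le hT]
    exact h0 T ⟨hT, le_refl _⟩
  have hIoc : ∀ l u : ℝ, ∫ x in Set.Ioc l u, f x ∂μ = 0 := by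
    intro l u
    have h1 : ∫ x in Set.Ioc l u, f x ∂μ = ∫ x in (Set.Ioc l u ∩ Set.Icc 0 T), f x := by
      rw [hμ, Measure.restrict_restrict measurableSet_Ioc]
    have h2 : ((Set.Ioc l u ∩ Set.Icc 0 T : Set ℝ)) =ᵐ[volume]
        (Set.Ioc (max l 0) (min u T) : Set ℝ) := by
      rw [MeasureTheory.ae_eq_set]
      constructor
      · refine measure_mono_null ?_ (measure_singleton (0:ℝ))
        rintro x ⟨⟨⟨hlx, hxu⟩, hx0, hxT⟩, hnot⟩
        simp only [Set.mem_Ioc, not_and, not_le, max_lt_iff] at hnot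
        by_contra hx
        have hx0' : 0 < x := lt_of_le_of_ne hx0 (Ne.symm hx)
        exact absurd (le_min hxu hxT) (not_le.mpr (hnot ⟨hlx, hx0'⟩))
      · refine measure_mono_null ?_ measure_empty
        rintro x ⟨⟨hx1, hx2⟩, hnot⟩
        exact absurd ⟨⟨lt_of_le_of_lt (le_max_left _ _) hx1, hx2.trans (min_le_left _ _)⟩,
          (le_max_right l 0).trans hx1.le, hx2.trans (min_le_right _ _)⟩ hnot
    rw [h1, setIntegral_congr_set h2]
    set a := max l 0
    set b := min u T
    rcases le_or_gt a b with hab | hab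
    · have ha : a ∈ Set.Icc (0:ℝ) T := ⟨le_max_right _ _, le_trans hab (min_le_right _ _)⟩
      have hb : b ∈ Set.Icc (0:ℝ) T := ⟨le_trans (le_max_right _ _) hab, min_le_right _ _⟩
      rw [← intervalIntegral.integral_of_le hab,
        ← intervalIntegral.integral_interval_sub_left (hIntV 0 b) (hIntV 0 a),
        h0 a ha, h0 b hb, sub_zero]
    · rw [Set.Ioc_eq_empty (not_lt.mpr hab.le), setIntegral_empty]
  have key : ∀ ⦃s : Set ℝ⦄, MeasurableSet s → ∫ x in s, f x ∂μ = 0 := by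
    refine MeasurableSpace.induction_on_inter
      (borel_eq_generateFrom_Ioc ℝ) (isPiSystem_Ioc (id : ℝ → ℝ) (id : ℝ → ℝ)) ?_ ?_ ?_ ?_
    · simp
    · rintro t ⟨l, u, _, rfl⟩
      exact hIoc l u
    · intro t ht h
      have := integral_add_compl ht hInt
      rw [h, zero_add] at this
      rw [this, htot]
    · intro g hdisj hmeasg hg
      rw [integral_iUnion hmeasg hdisj hInt.integrableOn]
      simp [hg]
  exact hInt.ae_eq_zero_of_forall_setIntegral_eq_zero fun s hs _ => key hs

/-- A continuous finite-variation martingale with a bounded, jointly measurable integrand `h`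
such that `h_s` is `ℱ_{s-}`-measurable must have `h = 0` a.e. with respect to
Lebesgue measure on `[0,T]` times `P`. -/
theorem integrand_zero_of_absolutely_continuous_martingale
    {Ω : Type*} {m0 : MeasurableSpace Ω} {T : ℝ}
    (ℱ : Filtration (Set.Icc (0 : ℝ) T) m0)
    (P : Measure Ω) [IsProbabilityMeasure P]
    (h : ℝ → Ω → ℝ)
    (hmeas : Measurable (Function.uncurry h))
    (hbdd : ∃ C, ∀ s ω, |h s ω| ≤ C)
    (hpred : ∀ s : Set.Icc (0 : ℝ) T, 0 < (s : ℝ) →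
      @Measurable Ω ℝ (⨆ (u : Set.Icc (0 : ℝ) T) (_ : u < s), ℱ u) _ (h (s : ℝ)))
    (M : Set.Icc (0 : ℝ) T → Ω → ℝ)
    (hM : ∀ t : Set.Icc (0 : ℝ) T, M t = fun ω => ∫ s in (0 : ℝ)..(t : ℝ), h s ω)
    (hmart : Martingale M ℱ P) :
    (fun p : ℝ × Ω => h p.1 p.2) =ᵐ[(volume.restrict (Set.Icc (0 : ℝ) T)).prod P] 0 := by
  classical
  by_cases hT : 0 ≤ T
  swap
  · rw [Set.Icc_eq_empty (fun hle : (0:ℝ) ≤ T => hT hle), Measure.restrict_empty]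
    rw [Measure.zero_prod]
    simp only [MeasureTheory.ae_zero]
    exact Filter.eventually_bot
  obtain ⟨C, hC⟩ := hbdd
  set K := max C 0 with hKdef
  have hK : ∀ s ω, |h s ω| ≤ K := fun s ω => (hC s ω).trans (le_max_left _ _)
  have hK0 : (0:ℝ) ≤ K := le_max_right _ _
  have hmeasω : ∀ ω, Measurable fun s => h s ω := fun ω =>
    hmeas.comp (measurable_id.prodMk measurable_const)
  have hIntV : ∀ (ω) (a b : ℝ), IntervalIntegrable (fun s => h s ω) volume a b := by
    intro ω a b
    constructor <;>
      exact ⟨(hmeasω ω).aestronglyMeasurable.restrict,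
        HasFiniteIntegral.of_bounded (C := K) (ae_of_all _ fun s => (Real.norm_eq_abs _ ▸ hK s ω))⟩
  -- increments
  have hincr : ∀ (ω : Ω) (a b : ℝ), a ≤ b →
      |(∫ s in (0:ℝ)..b, h s ω) - ∫ s in (0:ℝ)..a, h s ω| ≤ K * (b - a) := by
    intro ω a b hab
    rw [intervalIntegral.integral_interval_sub_left (hIntV ω 0 b) (hIntV ω 0 a)]
    calc |∫ s in a..b, h s ω| ≤ K * |b - a| :=
          intervalIntegral.norm_integral_le_of_norm_le_const fun x _ =>
            (Real.norm_eq_abs _ ▸ hK x ω)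
      _ = K * (b - a) := by rw [abs_of_nonneg (sub_nonneg.mpr hab)]
  -- boundedness of M
  have hMbd : ∀ (t : Set.Icc (0:ℝ) T) (ω : Ω), |M t ω| ≤ K * T := by
    intro t ω
    rw [hM t]
    calc |∫ s in (0:ℝ)..(t:ℝ), h s ω| ≤ K * |(t:ℝ) - 0| :=
        intervalIntegral.norm_integral_le_of_norm_le_const fun x _ =>
          (Real.norm_eq_abs _ ▸ hK x ω)
      _ = K * (t:ℝ) := by rw [sub_zero, abs_of_nonneg t.2.1]
      _ ≤ K * T := by
          exact mul_le_mul_of_nonneg_left t.2.2 hK0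
  have hMsm : ∀ t : Set.Icc (0:ℝ) T, StronglyMeasurable (M t) := fun t =>
    (hmart.1 t).mono (ℱ.le t)
  -- integrability of bounded strongly measurable functions
  have bint : ∀ (g : Ω → ℝ), StronglyMeasurable g → (∃ D, ∀ ω, |g ω| ≤ D) → Integrable g P := by
    rintro g hg ⟨D, hD⟩
    exact ⟨hg.aestronglyMeasurable,
      HasFiniteIntegral.of_bounded (C := D) (ae_of_all _ fun ω => (Real.norm_eq_abs _ ▸ hD ω))⟩
  have hMint : ∀ t, Integrable (M t) P := fun t =>
    bint _ (hMsm t) ⟨K * T, hMbd t⟩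
  have hmulint : ∀ a b : Set.Icc (0:ℝ) T, Integrable (M a * M b) P := by
    intro a b
    refine bint _ ((hMsm a).mul (hMsm b)) ⟨(K*T) * (K*T), fun ω => ?_⟩
    rw [Pi.mul_apply, abs_mul]
    exact mul_le_mul (hMbd a ω) (hMbd b ω) (abs_nonneg _) (le_trans (abs_nonneg _) (hMbd a ω))
  have hsqint : ∀ a b : Set.Icc (0:ℝ) T, Integrable (fun ω => (M b ω - M a ω)^2) P := by
    intro a b
    refine bint _ (((hMsm b).sub (hMsm a)).pow 2) ⟨(2*(K*T))^2, fun ω => ?_⟩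
    rw [abs_pow]
    refine pow_le_pow_left₀ (abs_nonneg _) ?_ 2
    calc |M b ω - M a ω| ≤ |M b ω| + |M a ω| := abs_sub _ _
      _ ≤ K*T + K*T := add_le_add (hMbd b ω) (hMbd a ω)
      _ = 2*(K*T) := by ring
  -- orthogonality
  have horth : ∀ a b : Set.Icc (0:ℝ) T, a ≤ b →
      ∫ ω, M a ω * M b ω ∂P = ∫ ω, M a ω * M a ω ∂P := by
    intro a b hab
    have hsm : StronglyMeasurable[ℱ a] (M a) := hmart.1 a
    have hce : P[M b | (ℱ a : MeasurableSpace Ω)] =ᵐ[P] M a := hmart.condExp_ae_eq hab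
    have hmul : P[(M a * M b) | (ℱ a : MeasurableSpace Ω)]
        =ᵐ[P] M a * P[M b | (ℱ a : MeasurableSpace Ω)] :=
      condExp_mul_of_stronglyMeasurable_left hsm (hmulint a b) (hMint b)
    calc ∫ ω, M a ω * M b ω ∂P
        = ∫ ω, (P[(M a * M b) | (ℱ a : MeasurableSpace Ω)]) ω ∂P :=
          (integral_condExp (ℱ.le a)).symm
      _ = ∫ ω, M a ω * M a ω ∂P := by
          refine integral_congr_ae (hmul.trans ?_)
          filter_upwards [hce] with ω hω
          simp [hω]
  -- one-step inequality
  have hstep : ∀ a b : Set.Icc (0:ℝ) T, a ≤ b →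
      ∫ ω, (M b ω)^2 ∂P ≤ ∫ ω, (M a ω)^2 ∂P + (K * ((b:ℝ) - (a:ℝ)))^2 := by
    intro a b hab
    have hsqa : Integrable (fun ω => (M a ω)^2) P := by
      have := hmulint a a
      simpa [pow_two, Pi.mul_def] using this
    have hexp : ∀ ω, (M b ω)^2 =
        (M b ω - M a ω)^2 + (2 * (M a ω * M b ω) - (M a ω)^2) := by intro ω; ring
    have hmulint' : Integrable (fun ω => M a ω * M b ω) P := hmulint a b
    have hint2 : Integrable (fun ω => 2 * (M a ω * M b ω) - (M a ω)^2) P :=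
      ((hmulint'.const_mul 2).sub hsqa)
    have h1 : ∫ ω, (M b ω)^2 ∂P
        = ∫ ω, (M b ω - M a ω)^2 ∂P + ∫ ω, (2 * (M a ω * M b ω) - (M a ω)^2) ∂P := by
      rw [← integral_add (hsqint a b) hint2]
      exact integral_congr_ae (ae_of_all _ hexp)
    have h2 : ∫ ω, (2 * (M a ω * M b ω) - (M a ω)^2) ∂P = ∫ ω, (M a ω)^2 ∂P := by
      rw [integral_sub (hmulint'.const_mul 2) hsqa, integral_const_mul, horth a b hab]
      have : ∫ ω, M a ω * M a ω ∂P = ∫ ω, (M a ω)^2 ∂P :=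
        integral_congr_ae (ae_of_all _ fun ω => (pow_two _).symm)
      rw [this]; ring
    have h3 : ∫ ω, (M b ω - M a ω)^2 ∂P ≤ (K * ((b:ℝ) - (a:ℝ)))^2 := by
      have hptw : ∀ ω, (M b ω - M a ω)^2 ≤ (K * ((b:ℝ) - (a:ℝ)))^2 := by
        intro ω
        have habs : |M b ω - M a ω| ≤ K * ((b:ℝ) - (a:ℝ)) := by
          rw [hM a, hM b]
          exact hincr ω a b hab
        calc (M b ω - M a ω)^2 = |M b ω - M a ω|^2 := (sq_abs _).symm
          _ ≤ (K * ((b:ℝ) - (a:ℝ)))^2 := pow_le_pow_left₀ (abs_nonneg _) habs 2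
      calc ∫ ω, (M b ω - M a ω)^2 ∂P ≤ ∫ _ω, (K * ((b:ℝ) - (a:ℝ)))^2 ∂P :=
            integral_mono (hsqint a b) (integrable_const _) hptw
        _ = (K * ((b:ℝ) - (a:ℝ)))^2 := by simp
    rw [h1, h2]
    linarith [h3]
  -- each M t is a.s. zero
  have hzero : ∀ t : Set.Icc (0:ℝ) T, ∀ᵐ ω ∂P, M t ω = 0 := by
    intro t
    have ht0 : (0:ℝ) ≤ (t:ℝ) := t.2.1
    have htT : (t:ℝ) ≤ T := t.2.2
    have hsqt : Integrable (fun ω => (M t ω)^2) P := by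
      have := hmulint t t
      simpa [pow_two, Pi.mul_def] using this
    have hsq0 : ∫ ω, (M t ω)^2 ∂P = 0 := by
      have hub : ∀ n : ℕ, 1 ≤ n → ∫ ω, (M t ω)^2 ∂P ≤ K^2 * (t:ℝ)^2 / n := by
        intro n hn
        have hnn : (0:ℝ) < n := by exact_mod_cast hn
        have hmem : ∀ k : ℕ, k ≤ n → ((k:ℝ) * t / n) ∈ Set.Icc (0:ℝ) T := by
          intro k hk
          have hkn : (k:ℝ) ≤ n := by exact_mod_cast hk
          constructor
          · positivity
          · have h1 : (k:ℝ) * t / n ≤ t := by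
              rw [div_le_iff₀ hnn]
              nlinarith
            exact h1.trans htT
        have claim : ∀ k : ℕ, k ≤ n → ∀ hmk : ((k:ℝ) * t / n) ∈ Set.Icc (0:ℝ) T,
            ∫ ω, (M ⟨(k:ℝ) * t / n, hmk⟩ ω)^2 ∂P ≤ k * (K * ((t:ℝ)/n))^2 := by
          intro k
          induction k with
          | zero =>
            intro _ hmk
            have hMz : ∀ ω, M ⟨(0:ℕ) * (t:ℝ) / n, hmk⟩ ω = 0 := by
              intro ω
              rw [hM]
              have : (((0:ℕ):ℝ) * (t:ℝ) / n) = (0:ℝ) := by simp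
              simp only [this]
              exact intervalIntegral.integral_same
            have : ∫ ω, (M ⟨(0:ℕ) * (t:ℝ) / n, hmk⟩ ω)^2 ∂P = 0 := by
              rw [integral_eq_zero_iff_of_nonneg (fun ω => sq_nonneg _) ?_]
              · exact ae_of_all _ fun ω => by
                  simp only [Pi.zero_apply]
                  rw [hMz ω]
                  norm_num
              · have := hmulint ⟨(0:ℕ) * (t:ℝ) / n, hmk⟩ ⟨(0:ℕ) * (t:ℝ) / n, hmk⟩
                simpa [pow_two, Pi.mul_def] using this
            rw [this]
            simp
          | succ k ih =>
            intro hk hmk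
            have hk' : k ≤ n := (Nat.lt_of_succ_le hk).le
            have hmk' := hmem k hk'
            have hle : (⟨(k:ℝ) * t / n, hmk'⟩ : Set.Icc (0:ℝ) T)
                ≤ ⟨((k+1:ℕ):ℝ) * t / n, hmk⟩ := by
              show (k:ℝ) * t / n ≤ ((k+1:ℕ):ℝ) * t / n
              have h0 : (0:ℝ) ≤ t := ht0
              push_cast
              gcongr
              linarith
            have hst := hstep _ _ hle
            have hdiff : (((k+1:ℕ):ℝ) * t / n - (k:ℝ) * t / n) = (t:ℝ)/n := by
              push_cast; ring
            rw [hdiff] at hst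
            calc ∫ ω, (M ⟨((k+1:ℕ):ℝ) * t / n, hmk⟩ ω)^2 ∂P
                ≤ ∫ ω, (M ⟨(k:ℝ) * t / n, hmk'⟩ ω)^2 ∂P + (K * ((t:ℝ)/n))^2 := hst
              _ ≤ k * (K * ((t:ℝ)/n))^2 + (K * ((t:ℝ)/n))^2 :=
                  add_le_add_left (ih hk' hmk') _
              _ = ((k+1:ℕ):ℝ) * (K * ((t:ℝ)/n))^2 := by push_cast; ring
        have hn' := claim n le_rfl (hmem n le_rfl)
        have hptn : (⟨(n:ℝ) * t / n, hmem n le_rfl⟩ : Set.Icc (0:ℝ) T) = t := by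
          apply Subtype.ext
          show (n:ℝ) * t / n = (t:ℝ)
          field_simp
        rw [hptn] at hn'
        calc ∫ ω, (M t ω)^2 ∂P ≤ n * (K * ((t:ℝ)/n))^2 := hn'
          _ = K^2 * (t:ℝ)^2 / n := by field_simp
      have hnonneg : 0 ≤ ∫ ω, (M t ω)^2 ∂P := integral_nonneg fun ω => sq_nonneg _
      have hle0 : ∫ ω, (M t ω)^2 ∂P ≤ 0 := by
        refine ge_of_tendsto (tendsto_const_div_atTop_nhds_zero_nat (K^2 * (t:ℝ)^2)) ?_
        filter_upwards [Filter.eventually_ge_atTop 1] with n hn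
        exact hub n hn
      linarith
    have := (integral_eq_zero_iff_of_nonneg (fun ω => sq_nonneg (M t ω)) hsqt).mp hsq0
    filter_upwards [this] with ω hω
    exact pow_eq_zero_iff two_ne_zero |>.mp hω
  -- pathwise: a.s. the function s ↦ h s ω vanishes a.e. on [0,T]
  have hae : ∀ᵐ ω ∂P, ∀ q : {q : ℚ // (q:ℝ) ∈ Set.Icc (0:ℝ) T},
      M ⟨((q:ℚ):ℝ), q.2⟩ ω = 0 := ae_all_iff.mpr fun q => hzero _
  have hpath : ∀ᵐ ω ∂P,
      (fun s => h s ω) =ᵐ[volume.restrict (Set.Icc (0:ℝ) T)] 0 := by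
    filter_upwards [hae] with ω hω
    refine aux_ae_zero hT (hmeasω ω) (fun s => hK s ω) ?_
    intro u hu
    rcases eq_or_lt_of_le hu.1 with hu0 | hu0
    · rw [← hu0, intervalIntegral.integral_same]
    · -- u > 0; approximate by rationals
      have hεbd : ∀ ε : ℝ, 0 < ε → |∫ s in (0:ℝ)..u, h s ω| ≤ K * ε := by
        intro ε hε
        obtain ⟨q, hq1, hq2⟩ := exists_rat_btwn (show max 0 (u - ε) < u from
          max_lt hu0 (by linarith))
        have hq0 : (0:ℝ) ≤ (q:ℝ) := le_of_lt (lt_of_le_of_lt (le_max_left _ _) hq1)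
        have hqT : ((q:ℝ)) ≤ T := le_of_lt (lt_of_lt_of_le hq2 hu.2)
        have hqmem : ((q:ℝ)) ∈ Set.Icc (0:ℝ) T := ⟨hq0, hqT⟩
        have hFq : (∫ s in (0:ℝ)..((q:ℚ):ℝ), h s ω) = 0 := by
          have := hω ⟨q, hqmem⟩
          rw [hM] at this
          exact this
        have := hincr ω ((q:ℚ):ℝ) u hq2.le
        rw [hFq, sub_zero] at this
        calc |∫ s in (0:ℝ)..u, h s ω| ≤ K * (u - (q:ℝ)) := this
          _ ≤ K * ε := by
              have : u - (q:ℝ) ≤ ε := by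
                have := lt_of_le_of_lt (le_max_right 0 (u - ε)) hq1
                linarith
              exact mul_le_mul_of_nonneg_left this hK0
      have habs : |∫ s in (0:ℝ)..u, h s ω| ≤ 0 := by
        refine le_of_forall_pos_le_add fun ε hε => ?_
        have hKε : 0 < ε / (K + 1) := by positivity
        calc |∫ s in (0:ℝ)..u, h s ω| ≤ K * (ε / (K + 1)) := hεbd _ hKε
          _ ≤ ε := by
              rw [mul_div_assoc']
              rw [div_le_iff₀ (by linarith : (0:ℝ) < K + 1)]
              nlinarith
          _ = 0 + ε := (zero_add ε).symm
      exact abs_eq_zero.mp (le_antisymm habs (abs_nonneg _))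
  -- conclude for the product measure
  set μ := volume.restrict (Set.Icc (0:ℝ) T) with hμdef
  have hAmeas : MeasurableSet {p : ℝ × Ω | h p.1 p.2 ≠ 0} := by
    have : {p : ℝ × Ω | h p.1 p.2 ≠ 0} = (Function.uncurry h) ⁻¹' ({0}ᶜ) := rfl
    rw [this]
    exact hmeas (measurableSet_singleton 0).compl
  have hnull : (μ.prod P) {p : ℝ × Ω | h p.1 p.2 ≠ 0} = 0 := by
    rw [Measure.prod_apply_symm hAmeas]
    have : ∀ᵐ ω ∂P, μ ((fun s => (s, ω)) ⁻¹' {p : ℝ × Ω | h p.1 p.2 ≠ 0}) = 0 := by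
      filter_upwards [hpath] with ω hω
      have : ((fun s => (s, ω)) ⁻¹' {p : ℝ × Ω | h p.1 p.2 ≠ 0}) = {s | h s ω ≠ 0} := rfl
      rw [this]
      exact hω
    rw [lintegral_congr_ae this, lintegral_zero]
  rw [Filter.eventuallyEq_iff_exists_mem]
  refine ⟨{p : ℝ × Ω | h p.1 p.2 ≠ 0}ᶜ, ?_, fun p hp => not_not.mp hp⟩
  rw [mem_ae_iff, compl_compl]
  exact hnull
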